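/- Let A ⊆ ℕ be nonempty and A' = {x ∈ A : stretch(A, x) odd} ∪ {y ∉ A : y > 0 and stretch(A, y−1) odd}. Then A Δ A' = (A ∩ A') + 1. -/
import Mathlib


open scoped symmDiff

def shift (A : Set ℕ) : Set ℕ := (· + 1) '' A

def kplus (A B : Set ℕ) : Set ℕ := (A ∆ B) ∆ shift (A ∩ B)

open Classical in
noncomputable def stretch (A : Set ℕ) (n : ℕ) : ℕ :=
  if n ∈ A then sSup {k | k ≤ n ∧ Set.Icc (n - k) n ⊆ A} + 1 else 0

noncomputable def inv' (A : Set ℕ) : Set ℕ :=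
  {x ∈ A | Odd (stretch A x)} ∪ {y | y ∉ A ∧ y > 0 ∧ Odd (stretch A (y - 1))}

lemma stretch_of_not_mem {A : Set ℕ} {n : ℕ} (h : n ∉ A) : stretch A n = 0 := by
  simp [stretch, h]

lemma stretch_pos {A : Set ℕ} {n : ℕ} (h : n ∈ A) : 0 < stretch A n := by
  simp [stretch, h]

lemma mem_of_stretch_pos {A : Set ℕ} {n : ℕ} (h : 0 < stretch A n) : n ∈ A := by
  by_contra hc
  simp [stretch_of_not_mem hc] at h

lemma stretch_succ_mem {A : Set ℕ} {n : ℕ} (h1 : n + 1 ∈ A) (h2 : n ∈ A) :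
    stretch A (n + 1) = stretch A n + 1 := by
  classical
  simp only [stretch, if_pos h1, if_pos h2]
  congr 1
  set S := {k | k ≤ n ∧ Set.Icc (n - k) n ⊆ A} with hS
  set T := {k | k ≤ n + 1 ∧ Set.Icc (n + 1 - k) (n + 1) ⊆ A} with hT
  have hS0 : (0 : ℕ) ∈ S := by
    constructor
    · exact Nat.zero_le _
    · intro m hm
      rw [Set.mem_Icc, Nat.sub_zero] at hm
      have : m = n := le_antisymm hm.2 hm.1
      simpa [this] using h2
  have hSne : S.Nonempty := ⟨0, hS0⟩
  have hSbdd : BddAbove S := ⟨n, fun k hk => hk.1⟩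
  have hTbdd : BddAbove T := ⟨n + 1, fun k hk => hk.1⟩
  have hSmem : sSup S ∈ S := Nat.sSup_mem hSne hSbdd
  have hmemT : sSup S + 1 ∈ T := by
    refine ⟨Nat.succ_le_succ hSmem.1, ?_⟩
    intro m hm
    simp only [Set.mem_Icc] at hm
    rcases hm with ⟨hm1, hm2⟩
    rcases Nat.lt_or_ge m (n + 1) with hlt | hge
    · have hm2' : m ≤ n := Nat.lt_succ_iff.mp hlt
      have : m ∈ Set.Icc (n - sSup S) n := by
        refine Set.mem_Icc.mpr ⟨?_, hm2'⟩
        have : n + 1 - (sSup S + 1) = n - sSup S := by omega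
        omega
      exact hSmem.2 this
    · have : m = n + 1 := le_antisymm hm2 hge
      simpa [this] using h1
  have hT0 : (0 : ℕ) ∈ T := by
    refine ⟨Nat.zero_le _, ?_⟩
    intro m hm
    rw [Set.mem_Icc, Nat.sub_zero] at hm
    have : m = n + 1 := le_antisymm hm.2 hm.1
    simpa [this] using h1
  apply le_antisymm
  · apply csSup_le ⟨0, hT0⟩
    intro k hk
    match k with
    | 0 => exact Nat.zero_le _
    | j + 1 =>
      have hj : j ∈ S := by
        refine ⟨Nat.le_of_succ_le_succ hk.1, ?_⟩
        intro m hm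
        apply hk.2
        simp only [Set.mem_Icc] at hm ⊢
        omega
      have := le_csSup hSbdd hj
      omega
  · exact le_csSup hTbdd hmemT

lemma stretch_succ_not_mem {A : Set ℕ} {n : ℕ} (h1 : n + 1 ∈ A) (h2 : n ∉ A) :
    stretch A (n + 1) = 1 := by
  classical
  simp only [stretch, if_pos h1]
  have : {k | k ≤ n + 1 ∧ Set.Icc (n + 1 - k) (n + 1) ⊆ A} = {0} := by
    ext k
    simp only [Set.mem_setOf_eq, Set.mem_singleton_iff]
    constructor
    · rintro ⟨hk1, hk2⟩
      by_contra hk0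
      have hkpos : 1 ≤ k := Nat.one_le_iff_ne_zero.mpr hk0
      have hn : n ∈ Set.Icc (n + 1 - k) (n + 1) := by
        simp only [Set.mem_Icc]; omega
      exact h2 (hk2 hn)
    · rintro rfl
      refine ⟨Nat.zero_le _, ?_⟩
      intro m hm
      simp only [Set.mem_Icc] at hm
      have : m = n + 1 := by omega
      simpa [this] using h1
  rw [this]
  simp

lemma stretch_zero_mem {A : Set ℕ} (h : 0 ∈ A) : stretch A 0 = 1 := by
  classical
  simp only [stretch, if_pos h]
  have : {k | k ≤ 0 ∧ Set.Icc (0 - k) 0 ⊆ A} = {0} := by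
    ext k
    simp only [Set.mem_setOf_eq, Set.mem_singleton_iff]
    constructor
    · rintro ⟨hk1, _⟩; omega
    · rintro rfl
      refine ⟨le_refl _, ?_⟩
      intro m hm
      simp only [Set.mem_Icc] at hm
      have : m = 0 := by omega
      simpa [this] using h
  rw [this]
  simp

theorem stmt15 : ∀ A : Set ℕ, A.Nonempty → A ∆ inv' A = shift (A ∩ inv' A) := by
  intro A _
  ext x
  have hshift : x ∈ shift (A ∩ inv' A) ↔ ∃ a, a ∈ A ∧ a ∈ inv' A ∧ a + 1 = x := by
    constructor
    · rintro ⟨a, ⟨ha1, ha2⟩, rfl⟩; exact ⟨a, ha1, ha2, rfl⟩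
    · rintro ⟨a, ha1, ha2, rfl⟩; exact ⟨a, ⟨ha1, ha2⟩, rfl⟩
  have hinv : ∀ z, z ∈ inv' A ↔ (z ∈ A ∧ Odd (stretch A z)) ∨ (z ∉ A ∧ z > 0 ∧ Odd (stretch A (z - 1))) := by
    intro z; rfl
  rw [Set.mem_symmDiff, hshift]
  constructor
  · rintro (⟨hxA, hxI⟩ | ⟨hxI, hxA⟩)
    · -- x ∈ A, x ∉ inv' A, so stretch A x even
      rw [hinv] at hxI
      push_neg at hxI
      have heven : ¬ Odd (stretch A x) := hxI.1 hxA
      -- stretch A x > 0 and even hence ≥ 2; so x > 0 and x-1 ∈ A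
      have hpos := stretch_pos hxA
      match x, hxA with
      | 0, h0 =>
        exact absurd (by rw [stretch_zero_mem h0]; exact odd_one) heven
      | n + 1, hn1 =>
        by_cases hn : n ∈ A
        · have hrec := stretch_succ_mem hn1 hn
          have hodd : Odd (stretch A n) := by
            rcases Nat.even_or_odd (stretch A n) with he | ho
            · exact absurd (by rw [hrec]; exact Even.add_one he) heven
            · exact ho
          refine ⟨n, hn, ?_, rfl⟩
          rw [hinv]
          exact Or.inl ⟨hn, hodd⟩
        · exact absurd (by rw [stretch_succ_not_mem hn1 hn]; exact odd_one) heven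
    · -- x ∈ inv' A, x ∉ A
      rw [hinv] at hxI
      rcases hxI with ⟨h, _⟩ | ⟨_, hpos, hodd⟩
      · exact absurd h hxA
      · have hmem : x - 1 ∈ A := mem_of_stretch_pos hodd.pos
        refine ⟨x - 1, hmem, ?_, by omega⟩
        rw [hinv]
        exact Or.inl ⟨hmem, hodd⟩
  · rintro ⟨a, haA, haI, rfl⟩
    rw [hinv] at haI
    have hodd : Odd (stretch A a) := by
      rcases haI with ⟨_, h⟩ | ⟨h, _⟩
      · exact h
      · exact absurd haA h
    by_cases hx : a + 1 ∈ A
    · left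
      refine ⟨hx, ?_⟩
      rw [hinv]
      push_neg
      refine ⟨fun _ => ?_, fun h => absurd hx h⟩
      rw [stretch_succ_mem hx haA]
      simp only [Nat.not_odd_iff_even]
      exact hodd.add_one
    · right
      refine ⟨?_, hx⟩
      rw [hinv]
      right
      refine ⟨hx, by omega, ?_⟩
      simpa using hodd
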